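/- arXiv:1909.05679 — 5 statements merged into one kernel-verified Lean document; each statement's English description precedes it below -/
import Mathlib

section
/- Let b_min > 0, c₂ > 0, b_max ≥ 0, BW_max ≥ 0, and let α₁, β₁, c₁ be real constants. Let F : ℝ → ℝ → ℝ (the service-guarantee function, F b BW being the probability the delivered rate meets the advertised rate b when bandwidth BW is allocated) be such that for every b the map BW ↦ F b BW is continuous on [0, BW_max] and F b 0 = 0. Define the feasible set C = {(b, BW) : 0 ≤ b ≤ b_max ∧ 0 ≤ BW ≤ BW_max ∧ b · F b BW ≥ b_min} and the service-provider utility U(b, BW) = α₁ · b^{β₁} − (c₁ · b + c₂ · BW). If (b*, BW*) ∈ C and U(b*, BW*) ≥ U(b, BW) for all (b, BW) ∈ C (i.e., (b*, BW*) is a maximizer of U over C), then b* · F b* BW* = b_min; that is, the minimum data-rate constraint is satisfied with equality at the optimum. -/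
/-- Theorem 1 of the paper: at a maximizer of the service-provider utility over the
feasible bid set, the minimum data-rate constraint is tight. -/
theorem sp_optimal_bid_rate_constraint_tight
    (b_min c₂ b_max BW_max α₁ β₁ c₁ : ℝ)
    (hbmin : 0 < b_min) (hc₂ : 0 < c₂) (hbmax : 0 ≤ b_max) (hBWmax : 0 ≤ BW_max)
    (F : ℝ → ℝ → ℝ)
    (hFcont : ∀ b, ContinuousOn (fun BW => F b BW) (Set.Icc 0 BW_max))
    (hF0 : ∀ b, F b 0 = 0)
    (C : Set (ℝ × ℝ))
    (hC : C = {p : ℝ × ℝ |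
      0 ≤ p.1 ∧ p.1 ≤ b_max ∧ 0 ≤ p.2 ∧ p.2 ≤ BW_max ∧ b_min ≤ p.1 * F p.1 p.2})
    (U : ℝ → ℝ → ℝ)
    (hU : ∀ b BW, U b BW = α₁ * b ^ β₁ - (c₁ * b + c₂ * BW))
    (bstar BWstar : ℝ)
    (hmem : (bstar, BWstar) ∈ C)
    (hopt : ∀ p ∈ C, U p.1 p.2 ≤ U bstar BWstar) :
    bstar * F bstar BWstar = b_min := by
  subst hC
  obtain ⟨hb0, hbm, hBW0, hBWm, hge⟩ := hmem
  refine le_antisymm ?_ hge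
  by_contra hlt
  push_neg at hlt
  -- g : BW ↦ bstar * F bstar BW
  set g : ℝ → ℝ := fun BW => bstar * F bstar BW with hg
  have hgcont : ContinuousOn g (Set.Icc 0 BWstar) :=
    (continuousOn_const.mul ((hFcont bstar).mono
      (Set.Icc_subset_Icc le_rfl hBWm)))
  have hg0 : g 0 = 0 := by simp [hg, hF0]
  have hmem' : b_min ∈ Set.Icc (g 0) (g BWstar) := by
    constructor
    · rw [hg0]; exact hbmin.le
    · exact hlt.le
  obtain ⟨BW', hBW'mem, hBW'eq⟩ :=
    intermediate_value_Icc hBW0 hgcont hmem'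
  obtain ⟨hBW'0, hBW'le⟩ := hBW'mem
  have hBW'lt : BW' < BWstar := by
    rcases lt_or_eq_of_le hBW'le with h | h
    · exact h
    · exfalso; rw [h] at hBW'eq; exact absurd hBW'eq (ne_of_lt hlt).symm
  have hfeas : (bstar, BW') ∈ {p : ℝ × ℝ |
      0 ≤ p.1 ∧ p.1 ≤ b_max ∧ 0 ≤ p.2 ∧ p.2 ≤ BW_max ∧ b_min ≤ p.1 * F p.1 p.2} :=
    ⟨hb0, hbm, hBW'0, hBW'le.trans hBWm, hBW'eq.ge⟩
  have := hopt (bstar, BW') hfeas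
  simp only [hU] at this
  nlinarith [mul_lt_mul_of_pos_left hBW'lt hc₂]
end

section
/- Let r : ℝ → ℝ and constants c₁, c₂ ∈ ℝ with c₂ ≥ 0 be such that the map b ↦ r b − c₁ · b is monotone nondecreasing. Let d : ℝ × ℝ → Bool be a user decision function and define the reward R(b, BW) = if d (b, BW) then r b − c₁ · b − c₂ · BW else 0. Suppose d (b_j, BW_j) = true (the user accepts bid (b_j, BW_j)), and let (b_k, BW_k) satisfy b_k ≤ b_j and BW_k ≥ BW_j (so bid (b_j, BW_j) Pareto dominates bid (b_k, BW_k) from the provider's perspective). Then max (R (b_k, BW_k)) 0 ≤ max (R (b_j, BW_j)) 0. -/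
/-- Soundness of the accept-case pruning rule of the DPOB algorithm:
if the user accepts bid (b_j, BW_j), then every bid it Pareto dominates from the
provider's perspective achieves no larger nonnegative reward. -/
theorem dpob_accept_prune_sound
    (r : ℝ → ℝ) (c₁ c₂ : ℝ) (hc₂ : 0 ≤ c₂)
    (hmono : Monotone (fun b => r b - c₁ * b))
    (d : ℝ × ℝ → Bool)
    (R : ℝ × ℝ → ℝ)
    (hR : ∀ b BW, R (b, BW) = if d (b, BW) then r b - c₁ * b - c₂ * BW else 0)
    (bj BWj bk BWk : ℝ)
    (hacc : d (bj, BWj) = true)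
    (hb : bk ≤ bj) (hBW : BWj ≤ BWk) :
    max (R (bk, BWk)) 0 ≤ max (R (bj, BWj)) 0 := by
  have hj : R (bj, BWj) = r bj - c₁ * bj - c₂ * BWj := by simp [hR, hacc]
  rcases hk : d (bk, BWk) with h | h
  · have : R (bk, BWk) = 0 := by simp [hR, hk]
    simp [this]
  · have hkv : R (bk, BWk) = r bk - c₁ * bk - c₂ * BWk := by simp [hR, hk]
    have h1 := hmono hb
    have h2 : c₂ * BWj ≤ c₂ * BWk := mul_le_mul_of_nonneg_left hBW hc₂
    have : R (bk, BWk) ≤ R (bj, BWj) := by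
      rw [hj, hkv]; simp only at h1; linarith
    exact max_le_max this le_rfl
end

section
/- Let S be a finite nonempty set of pairs (b, BW) ∈ ℝ × ℝ. Let d : ℝ × ℝ → Bool satisfy the rationality property (if d (b, BW) = false, b' ≥ b, and BW' ≤ BW then d (b', BW') = false), let r : ℝ → ℝ and c₁, c₂ ∈ ℝ with c₂ ≥ 0 and with b ↦ r b − c₁ · b monotone nondecreasing, and define R(b, BW) = if d (b, BW) then r b − c₁ · b − c₂ · BW else 0. Suppose s* ∈ S maximizes max (R s) 0 over s ∈ S, and suppose s_j ∈ S is such that s* would be pruned upon visiting s_j, i.e., either (d s_j = true and b_{s*} ≤ b_{s_j} and BW_{s*} ≥ BW_{s_j}) or (d s_j = false and b_{s*} ≥ b_{s_j} and BW_{s*} ≤ BW_{s_j}). Then max (R s_j) 0 = max (R s*) 0; that is, the visited state s_j already achieves the optimal nonnegative reward. -/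
/-- Correctness part of Theorem 2: an optimal state is only ever pruned by a visited
state whose recorded nonnegative reward already equals the optimum. -/
theorem dpob_pruned_optimum_already_achieved
    (S : Finset (ℝ × ℝ)) (hS : S.Nonempty)
    (d : ℝ × ℝ → Bool)
    (hrat : ∀ b BW b' BW', d (b, BW) = false → b ≤ b' → BW' ≤ BW → d (b', BW') = false)
    (r : ℝ → ℝ) (c₁ c₂ : ℝ) (hc₂ : 0 ≤ c₂)
    (hmono : Monotone (fun b => r b - c₁ * b))
    (R : ℝ × ℝ → ℝ)
    (hR : ∀ b BW, R (b, BW) = if d (b, BW) then r b - c₁ * b - c₂ * BW else 0)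
    (sstar : ℝ × ℝ) (hsstar : sstar ∈ S)
    (hopt : ∀ s ∈ S, max (R s) 0 ≤ max (R sstar) 0)
    (sj : ℝ × ℝ) (hsj : sj ∈ S)
    (hprune : (d sj = true ∧ sstar.1 ≤ sj.1 ∧ sj.2 ≤ sstar.2) ∨
              (d sj = false ∧ sj.1 ≤ sstar.1 ∧ sstar.2 ≤ sj.2)) :
    max (R sj) 0 = max (R sstar) 0 := by
  refine le_antisymm (hopt sj hsj) ?_
  rcases hprune with ⟨hdj, hb, hbw⟩ | ⟨hdj, hb, hbw⟩
  · -- sj accepted, dominates sstar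
    have hRj : R sj = r sj.1 - c₁ * sj.1 - c₂ * sj.2 := by
      rw [show sj = (sj.1, sj.2) from rfl] at hdj ⊢
      rw [hR, hdj]; simp
    have hle : R sstar ≤ R sj := by
      rw [show sstar = (sstar.1, sstar.2) from rfl, hR]
      rw [hRj]
      by_cases hds : d (sstar.1, sstar.2) = true
      · rw [hds]; simp only [if_true]
        have h1 : r sstar.1 - c₁ * sstar.1 ≤ r sj.1 - c₁ * sj.1 := hmono hb
        have h2 : c₂ * sj.2 ≤ c₂ * sstar.2 := mul_le_mul_of_nonneg_left hbw hc₂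
        linarith
      · rw [if_neg hds]
        have hds' : d (sj.1, sj.2) = false := hrat _ _ _ _ (by simpa using hds) hb hbw
        rw [show (sj.1, sj.2) = sj from rfl] at hds'
        rw [hdj] at hds'; exact absurd hds' (by simp)
    exact max_le_max hle le_rfl
  · -- sj rejected, so sstar rejected too
    have hds : d (sstar.1, sstar.2) = false := hrat _ _ _ _ (by simpa using hdj) hb hbw
    have : R sstar = 0 := by
      rw [show sstar = (sstar.1, sstar.2) from rfl, hR, hds]; simp
    rw [this]
    simp [le_max_right]
end

section
/- Let α ∈ (0, 1) and define the Prelec probability weighting function w : ℝ → ℝ by w p = Real.exp (−(−Real.log p) ^ α). Then w is concave on the interval (0, Real.exp (−1)): for all p, q in (0, e⁻¹) and all t ∈ [0, 1], w (t·p + (1−t)·q) ≥ t · w p + (1−t) · w q. -/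
open Real Set

section aux
variable {α : ℝ}

/-- First derivative of the Prelec function. -/
lemma prelec_hasDerivAt (hα : α ∈ Set.Ioo (0:ℝ) 1) {p : ℝ} (hp : 0 < p) (hu : 1 < -Real.log p) :
    HasDerivAt (fun x => Real.exp (-(-Real.log x) ^ α))
      (Real.exp (-(-Real.log p) ^ α) * (α * ((-Real.log p) ^ (α - 1) * p⁻¹))) p := by
  have h1 : HasDerivAt (fun x => -Real.log x) (-p⁻¹) p := (Real.hasDerivAt_log hp.ne').neg
  have h2 := (h1.rpow_const (p := α) (Or.inl (by positivity : (0:ℝ) < -Real.log p).ne')).neg.exp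
  convert h2 using 1
  · rfl
  · simp only [Pi.neg_apply]; ring

lemma prelec_deriv2_hasDerivAt (hα : α ∈ Set.Ioo (0:ℝ) 1) {p : ℝ} (hp : 0 < p)
    (hu : 1 < -Real.log p) :
    HasDerivAt (fun x => Real.exp (-(-Real.log x) ^ α) * (α * ((-Real.log x) ^ (α - 1) * x⁻¹)))
      (Real.exp (-(-Real.log p) ^ α) * (α * ((-Real.log p) ^ (α - 1) * p⁻¹)) *
          (α * ((-Real.log p) ^ (α - 1) * p⁻¹)) +
        Real.exp (-(-Real.log p) ^ α) *
          (α * (((α - 1) * (-Real.log p) ^ (α - 1 - 1) * (-p⁻¹)) * p⁻¹ +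
            (-Real.log p) ^ (α - 1) * (-(p ^ 2)⁻¹)))) p := by
  have h1 : HasDerivAt (fun x => -Real.log x) (-p⁻¹) p := (Real.hasDerivAt_log hp.ne').neg
  have hune : (-Real.log p) ≠ 0 := by positivity
  have hA := (h1.rpow_const (p := α) (Or.inl hune)).neg.exp
  have hB := ((h1.rpow_const (p := α - 1) (Or.inl hune)).mul (hasDerivAt_inv hp.ne')).const_mul α
  have := (by convert hA using 1; rfl; simp only [Pi.neg_apply]; ring :
    HasDerivAt (fun x => Real.exp (-(-Real.log x) ^ α))
      (Real.exp (-(-Real.log p) ^ α) * (α * ((-Real.log p) ^ (α - 1) * p⁻¹))) p).mul hB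
  refine this.congr_deriv ?_
  change _ * (α * ((-Real.log p) ^ (α - 1) * p⁻¹)) + _ = _; ring

end aux

/-- Key algebraic inequality: for u > 1 and 0 < α < 1, α·u^α ≤ u + α - 1. -/
lemma prelec_key {α u : ℝ} (hα : α ∈ Set.Ioo (0:ℝ) 1) (hu : 1 < u) :
    α * u ^ α ≤ u + α - 1 := by
  have h1 : u ^ α ≤ u ^ (1:ℝ) :=
    Real.rpow_le_rpow_of_exponent_le hu.le hα.2.le
  rw [Real.rpow_one] at h1
  nlinarith [hα.1, hα.2, mul_le_mul_of_nonneg_left h1 hα.1.le]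

theorem prelec_concaveOn (α : ℝ) (hα : α ∈ Set.Ioo (0 : ℝ) 1) :
    ConcaveOn ℝ (Set.Ioo (0 : ℝ) (Real.exp (-1)))
      (fun x => Real.exp (-(-Real.log x) ^ α)) := by
  set D : Set ℝ := Set.Ioo (0 : ℝ) (Real.exp (-1)) with hD
  have hint : interior D = D := interior_Ioo
  have hmem : ∀ x ∈ D, 0 < x ∧ 1 < -Real.log x := by
    intro x hx
    refine ⟨hx.1, ?_⟩
    have := Real.log_lt_log hx.1 hx.2
    rw [Real.log_exp] at this
    linarith
  -- first derivative
  have hderiv : ∀ x ∈ D, deriv (fun x => Real.exp (-(-Real.log x) ^ α)) x =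
      Real.exp (-(-Real.log x) ^ α) * (α * ((-Real.log x) ^ (α - 1) * x⁻¹)) := by
    intro x hx
    exact (prelec_hasDerivAt hα (hmem x hx).1 (hmem x hx).2).deriv
  have hdiff : DifferentiableOn ℝ (fun x => Real.exp (-(-Real.log x) ^ α)) D := by
    intro x hx
    exact (prelec_hasDerivAt hα (hmem x hx).1 (hmem x hx).2).differentiableAt.differentiableWithinAt
  refine concaveOn_of_deriv2_nonpos (convex_Ioo _ _) hdiff.continuousOn
    (hint ▸ hdiff) ?_ ?_
  · rw [hint]
    intro x hx
    have heq : deriv (fun x => Real.exp (-(-Real.log x) ^ α)) =ᶠ[nhds x]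
        (fun y => Real.exp (-(-Real.log y) ^ α) * (α * ((-Real.log y) ^ (α - 1) * y⁻¹))) := by
      filter_upwards [isOpen_Ioo.mem_nhds hx] with y hy using hderiv y hy
    refine DifferentiableAt.congr_of_eventuallyEq ?_ heq |>.differentiableWithinAt
    exact (prelec_deriv2_hasDerivAt hα (hmem x hx).1 (hmem x hx).2).differentiableAt
  · rw [hint]
    intro x hx
    obtain ⟨hx0, hu⟩ := hmem x hx
    have heq : deriv (fun x => Real.exp (-(-Real.log x) ^ α)) =ᶠ[nhds x]
        (fun y => Real.exp (-(-Real.log y) ^ α) * (α * ((-Real.log y) ^ (α - 1) * y⁻¹))) := by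
      filter_upwards [isOpen_Ioo.mem_nhds hx] with y hy using hderiv y hy
    have h2 : deriv^[2] (fun x => Real.exp (-(-Real.log x) ^ α)) x =
        deriv (fun y => Real.exp (-(-Real.log y) ^ α) * (α * ((-Real.log y) ^ (α - 1) * y⁻¹))) x := by
      simp only [Function.iterate_succ, Function.iterate_zero, Function.comp_apply, id]
      exact Filter.EventuallyEq.deriv_eq heq
    rw [h2, (prelec_deriv2_hasDerivAt hα hx0 hu).deriv]
    -- now prove the explicit formula is ≤ 0
    set u : ℝ := -Real.log x with hudef
    have hu0 : 0 < u := by linarith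
    have hkey := prelec_key hα hu
    -- rpow identities
    have e1 : u ^ (α - 1) = u ^ (α - 1 - 1) * u := by
      rw [← Real.rpow_add_one hu0.ne' (α - 1 - 1)]
      congr 1; ring
    have e3 : u ^ (α - 1 - 1) * u * u = u ^ α := by
      rw [← Real.rpow_add_one hu0.ne' (α - 1 - 1), ← Real.rpow_add_one hu0.ne']
      congr 1; ring
    have hinv' : (x ^ 2)⁻¹ = x⁻¹ * x⁻¹ := by rw [sq, mul_inv]
    rw [e1, hinv']
    have key2 : α * (u ^ (α - 1 - 1) * u * u) ≤ u + α - 1 := by rw [e3]; exact hkey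
    have c0 : (0 : ℝ) ≤ Real.exp (-u ^ α) * (u ^ (α - 1 - 1) * (x⁻¹ * x⁻¹)) := by positivity
    have h3 := mul_le_mul_of_nonneg_left (mul_le_mul_of_nonneg_left key2 c0) hα.1.le
    nlinarith [h3]

/-- The Prelec probability weighting function is concave on (0, 1/e). -/
theorem prelec_concave_below_inv_e
    (α : ℝ) (hα : α ∈ Set.Ioo (0 : ℝ) 1)
    (w : ℝ → ℝ) (hw : ∀ p, w p = Real.exp (-(-Real.log p) ^ α)) :
    ∀ p ∈ Set.Ioo (0 : ℝ) (Real.exp (-1)), ∀ q ∈ Set.Ioo (0 : ℝ) (Real.exp (-1)),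
      ∀ t ∈ Set.Icc (0 : ℝ) 1,
        t * w p + (1 - t) * w q ≤ w (t * p + (1 - t) * q) := by
  intro p hp q hq t ht
  have hc := prelec_concaveOn α hα
  have := hc.2 hp hq ht.1 (by linarith [ht.2] : (0:ℝ) ≤ 1 - t) (by ring)
  simp only [smul_eq_mul] at this
  simpa [hw] using this
end

section
/- Let α ∈ (0, 1) and define the Prelec probability weighting function w : ℝ → ℝ by w p = Real.exp (−(−Real.log p) ^ α). Then w is convex on the interval (Real.exp (−1), 1): for all p, q in (e⁻¹, 1) and all t ∈ [0, 1], w (t·p + (1−t)·q) ≤ t · w p + (1−t) · w q. -/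
noncomputable def prelecF (α : ℝ) : ℝ → ℝ := fun p => Real.exp (-(-Real.log p) ^ α)
noncomputable def prelecG (α : ℝ) : ℝ → ℝ := fun p => α * (-Real.log p) ^ (α - 1) * p⁻¹
noncomputable def prelecG' (α : ℝ) : ℝ → ℝ := fun p =>
  α * ((α - 1) * (-Real.log p) ^ (α - 1 - 1) * (-p⁻¹)) * p⁻¹
    + α * (-Real.log p) ^ (α - 1) * (-(p ^ 2)⁻¹)

lemma prelec_mem (p : ℝ) (hp : p ∈ Set.Ioo (Real.exp (-1)) 1) :
    0 < p ∧ 0 < -Real.log p ∧ -Real.log p < 1 := by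
  have hp0 : 0 < p := lt_trans (Real.exp_pos _) hp.1
  have h1 : Real.log p < 0 := Real.log_neg hp0 hp.2
  have h2 : -1 < Real.log p := (Real.lt_log_iff_exp_lt hp0).2 hp.1
  exact ⟨hp0, by linarith, by linarith⟩

lemma prelec_hasDerivAt_s11 (α : ℝ) (p : ℝ) (hp : p ∈ Set.Ioo (Real.exp (-1)) 1) :
    HasDerivAt (prelecF α) (prelecF α p * prelecG α p) p := by
  obtain ⟨hp0, hu0, hu1⟩ := prelec_mem p hp
  have h1 : HasDerivAt (fun x => -Real.log x) (-p⁻¹) p :=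
    (Real.hasDerivAt_log hp0.ne').neg
  have h3 : HasDerivAt (fun x => (-Real.log x) ^ α)
      (-p⁻¹ * α * (-Real.log p) ^ (α - 1)) p :=
    h1.rpow_const (Or.inl hu0.ne')
  have h5 := h3.neg.exp
  convert h5 using 1
  · funext x; simp only [prelecF, Pi.neg_apply]
  simp only [prelecF, prelecG, Pi.neg_apply]
  ring

lemma prelecG_hasDerivAt (α : ℝ) (p : ℝ) (hp : p ∈ Set.Ioo (Real.exp (-1)) 1) :
    HasDerivAt (prelecG α) (prelecG' α p) p := by
  obtain ⟨hp0, hu0, hu1⟩ := prelec_mem p hp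
  have h1 : HasDerivAt (fun x => -Real.log x) (-p⁻¹) p :=
    (Real.hasDerivAt_log hp0.ne').neg
  have hB : HasDerivAt (fun x => (-Real.log x) ^ (α - 1))
      (-p⁻¹ * (α - 1) * (-Real.log p) ^ (α - 1 - 1)) p :=
    h1.rpow_const (Or.inl hu0.ne')
  have hC : HasDerivAt (fun x : ℝ => x⁻¹) (-(p ^ 2)⁻¹) p := hasDerivAt_inv hp0.ne'
  have := (hB.const_mul α).mul hC
  convert this using 1
  · rfl
  · rfl
  · funext x; rfl
  simp only [prelecG']
  ring

lemma prelec_second_nonneg (α : ℝ) (hα0 : 0 < α) (hα1 : α < 1)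
    (p : ℝ) (hp : p ∈ Set.Ioo (Real.exp (-1)) 1) :
    0 ≤ prelecF α p * prelecG α p * prelecG α p + prelecF α p * prelecG' α p := by
  obtain ⟨hp0, hu0, hu1⟩ := prelec_mem p hp
  set u := -Real.log p with hu
  have hua : u ≤ u ^ α := by
    have := Real.rpow_le_rpow_of_exponent_ge hu0 hu1.le hα1.le
    rwa [Real.rpow_one] at this
  have e1 : u ^ (α - 1) = u ^ (α - 1 - 1) * u := by
    rw [← Real.rpow_add_one hu0.ne' (α - 1 - 1)]
    congr 1; ring
  have e2 : u ^ (α - 1) * u ^ (α - 1) = u ^ (α - 1 - 1) * u ^ α := by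
    rw [← Real.rpow_add hu0, ← Real.rpow_add hu0]
    congr 1; ring
  have hpsq : (p ^ 2 : ℝ)⁻¹ = p⁻¹ * p⁻¹ := by
    rw [sq, mul_inv]
  have h1 : prelecG α p * prelecG α p
      = α * α * (u ^ (α - 1 - 1) * u ^ α) * (p⁻¹ * p⁻¹) := by
    simp only [prelecG, ← hu]
    rw [← e2]; ring
  have h2 : prelecG' α p = α * u ^ (α - 1 - 1) * (p⁻¹ * p⁻¹) * (1 - α - u) := by
    simp only [prelecG', ← hu]
    rw [e1, hpsq]; ring
  have hkey : 0 ≤ α * u ^ α + 1 - α - u := by nlinarith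
  have hfac : prelecG α p * prelecG α p + prelecG' α p
      = (α * u ^ (α - 1 - 1) * (p⁻¹ * p⁻¹)) * (α * u ^ α + 1 - α - u) := by
    rw [h1, h2]; ring
  have hF : 0 < prelecF α p := Real.exp_pos _
  have hnn : 0 ≤ prelecG α p * prelecG α p + prelecG' α p := by
    rw [hfac]
    have hv : 0 < u ^ (α - 1 - 1) := Real.rpow_pos_of_pos hu0 _
    have : 0 < p⁻¹ := inv_pos.2 hp0
    exact mul_nonneg (by positivity) hkey
  calc (0:ℝ) = prelecF α p * 0 := by ring
  _ ≤ prelecF α p * (prelecG α p * prelecG α p + prelecG' α p) :=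
      mul_le_mul_of_nonneg_left hnn hF.le
  _ = prelecF α p * prelecG α p * prelecG α p + prelecF α p * prelecG' α p := by ring

lemma prelec_convexOn (α : ℝ) (hα0 : 0 < α) (hα1 : α < 1) :
    ConvexOn ℝ (Set.Ioo (Real.exp (-1)) 1) (prelecF α) := by
  have hint : interior (Set.Ioo (Real.exp (-1)) 1) = Set.Ioo (Real.exp (-1)) 1 :=
    isOpen_Ioo.interior_eq
  refine convexOn_of_hasDerivWithinAt2_nonneg (f' := fun p => prelecF α p * prelecG α p)
    (f'' := fun p => prelecF α p * prelecG α p * prelecG α p + prelecF α p * prelecG' α p)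
    (convex_Ioo _ _) ?_ ?_ ?_ ?_
  · exact fun p hp => (prelec_hasDerivAt_s11 α p hp).continuousAt.continuousWithinAt
  · rw [hint]
    exact fun p hp => (prelec_hasDerivAt_s11 α p hp).hasDerivWithinAt
  · rw [hint]
    intro p hp
    exact (((prelec_hasDerivAt_s11 α p hp).mul (prelecG_hasDerivAt α p hp))).hasDerivWithinAt
  · rw [hint]
    exact fun p hp => prelec_second_nonneg α hα0 hα1 p hp

/-- The Prelec probability weighting function is convex on (1/e, 1). -/
theorem prelec_convex_above_inv_e
    (α : ℝ) (hα : α ∈ Set.Ioo (0 : ℝ) 1)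
    (w : ℝ → ℝ) (hw : ∀ p, w p = Real.exp (-(-Real.log p) ^ α)) :
    ∀ p ∈ Set.Ioo (Real.exp (-1)) 1, ∀ q ∈ Set.Ioo (Real.exp (-1)) 1,
      ∀ t ∈ Set.Icc (0 : ℝ) 1,
        w (t * p + (1 - t) * q) ≤ t * w p + (1 - t) * w q := by
  intro p hp q hq t ht
  rw [hw, hw, hw]
  have hc := prelec_convexOn α hα.1 hα.2
  have := hc.2 hp hq ht.1 (by linarith [ht.2] : (0:ℝ) ≤ 1 - t) (by ring)
  simpa [prelecF, smul_eq_mul] using this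
end
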